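/- arXiv:1801.04030 — 3 statements merged into one kernel-verified Lean document; each statement's English description precedes it below -/
import Mathlib

section
/- Let m ≤ n be natural numbers and let s : (Z/9)^n → (Z/9)^m be a surjective group homomorphism. Then there exists a basis change of (Z/9)^m (an automorphism of (Z/9)^m) and a permutation of the coordinates of (Z/9)^n such that, with respect to the new bases, s is represented by a matrix of block form [I_m | A] where I_m is the m×m identity matrix over Z/9 and A is an arbitrary m×(n−m) matrix over Z/9. -/
private lemma zmod9_unit_or_dvd : ∀ a : ZMod 9, (∃ b, a * b = 1) ∨ (∃ d, a = 3 * d) := by decide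

private lemma zmod9_three_mul_ne_one : ∀ y : ZMod 9, (3 : ZMod 9) * y ≠ 1 := by decide

private lemma key_lemma (m n : ℕ) (hmn : m ≤ n) (M : Matrix (Fin m) (Fin n) (ZMod 9))
    (hM : Function.Surjective M.mulVec) :
    ∀ k, k ≤ m → ∃ (P Q : Matrix (Fin m) (Fin m) (ZMod 9)) (π : Equiv.Perm (Fin n)),
      P * Q = 1 ∧ Q * P = 1 ∧
      ∀ (i : Fin m) (j : Fin n), (j : ℕ) < k →
        (P * M) i (π j) = if (j : ℕ) = (i : ℕ) then 1 else 0 := by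
  intro k
  induction k with
  | zero => exact fun _ => ⟨1, 1, 1, by simp, by simp, fun i j h => absurd h (Nat.not_lt_zero _)⟩
  | succ k ih =>
    intro hk
    obtain ⟨P, Q, π, hPQ, hQP, hinv⟩ := ih (Nat.le_of_succ_le hk)
    have hkm : k < m := hk
    set k' : Fin m := ⟨k, hkm⟩ with hk'
    have hkn : k < n := lt_of_lt_of_le hkm hmn
    set κ : Fin n := ⟨k, hkn⟩ with hκ
    have hk'v : (k' : ℕ) = k := rfl
    have hκv : (κ : ℕ) = k := rfl
    have hsurj : Function.Surjective (P * M).mulVec := by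
      intro y
      obtain ⟨x, hx⟩ := hM (Q.mulVec y)
      refine ⟨x, ?_⟩
      rw [← Matrix.mulVec_mulVec, hx, Matrix.mulVec_mulVec, hPQ, Matrix.one_mulVec]
    obtain ⟨x, hx⟩ := hsurj (Pi.single k' 1)
    have hrow : ∑ l, (P * M) k' l * x l = 1 := by
      have h1 := congrFun hx k'
      simpa [Matrix.mulVec, dotProduct, Pi.single_eq_same] using h1
    have hpiv : ∃ l, ∃ v, (P * M) k' l * v = 1 := by
      by_contra h
      push_neg at h
      have hd : ∀ l, ∃ d, (P * M) k' l = 3 * d := by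
        intro l
        rcases zmod9_unit_or_dvd ((P * M) k' l) with ⟨b, hb⟩ | hdl
        · exact absurd hb (h l b)
        · exact hdl
      choose d hdl using hd
      have h3 : (3 : ZMod 9) * ∑ l, d l * x l = 1 := by
        rw [Finset.mul_sum, ← hrow]
        exact Finset.sum_congr rfl fun l _ => by rw [hdl l]; ring
      exact zmod9_three_mul_ne_one _ h3
    obtain ⟨l₀, v, huv⟩ := hpiv
    set j : Fin n := π.symm l₀ with hj
    have hbj : (P * M) k' (π j) * v = 1 := by rw [hj, Equiv.apply_symm_apply]; exact huv
    have hjk : k ≤ (j : ℕ) := by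
      by_contra hlt
      push_neg at hlt
      have h0 := hinv k' j hlt
      rw [if_neg (by rw [hk'v]; omega)] at h0
      rw [h0, zero_mul] at hbj
      exact absurd hbj (by decide)
    set π' : Equiv.Perm (Fin n) := π * Equiv.swap κ j with hπ'
    set b : Fin m → ZMod 9 := fun i => (P * M) i (π j) with hb
    have huv' : b k' * v = 1 := hbj
    have hvu : v * b k' = 1 := by rw [mul_comm]; exact hbj
    set E : Matrix (Fin m) (Fin m) (ZMod 9) :=
      Matrix.of (fun i l => if l = k' then (if i = k' then v else -(b i) * v)
        else (if i = l then 1 else 0)) with hE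
    set E' : Matrix (Fin m) (Fin m) (ZMod 9) :=
      Matrix.of (fun i l => if l = k' then (if i = k' then b k' else b i)
        else (if i = l then 1 else 0)) with hE'
    have Esum : ∀ (i : Fin m) (X : Fin m → ZMod 9),
        ∑ l, E i l * X l = if i = k' then v * X k' else X i + (-(b i) * v) * X k' := by
      intro i X
      by_cases hik : i = k'
      · rw [if_pos hik, Finset.sum_eq_single k']
        · simp [hE, hik]
        · intro c _ hc
          have hic : i ≠ c := by rw [hik]; exact Ne.symm hc
          simp [hE, hc, hic]
        · simp
      · rw [if_neg hik]
        have hterm : ∀ l, E i l * X l =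
            (if l = i then X i else 0) + (if l = k' then (-(b i) * v) * X k' else 0) := by
          intro l
          by_cases h1 : l = k'
          · subst h1
            simp [hE, hik, Ne.symm hik]
          · by_cases h2 : l = i
            · subst h2; simp [hE, h1]
            · simp [hE, h1, h2, Ne.symm h2]
        rw [Finset.sum_congr rfl fun l _ => hterm l, Finset.sum_add_distrib]
        simp
    have E'sum : ∀ (i : Fin m) (X : Fin m → ZMod 9),
        ∑ l, E' i l * X l = if i = k' then b k' * X k' else X i + b i * X k' := by
      intro i X
      by_cases hik : i = k'
      · rw [if_pos hik, Finset.sum_eq_single k']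
        · simp [hE', hik]
        · intro c _ hc
          have hic : i ≠ c := by rw [hik]; exact Ne.symm hc
          simp [hE', hc, hic]
        · simp
      · rw [if_neg hik]
        have hterm : ∀ l, E' i l * X l =
            (if l = i then X i else 0) + (if l = k' then b i * X k' else 0) := by
          intro l
          by_cases h1 : l = k'
          · subst h1
            simp [hE', hik, Ne.symm hik]
          · by_cases h2 : l = i
            · subst h2; simp [hE', h1]
            · simp [hE', h1, h2, Ne.symm h2]
        rw [Finset.sum_congr rfl fun l _ => hterm l, Finset.sum_add_distrib]
        simp
    have hEE' : E * E' = 1 := by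
      ext i c
      rw [Matrix.mul_apply, Esum i (fun l => E' l c)]
      by_cases hik : i = k'
      · rw [if_pos hik, hik]
        by_cases hck : c = k'
        · rw [hck]
          simp [hE', hvu, Matrix.one_apply]
        · simp [hE', hck, Ne.symm hck, Matrix.one_apply]
      · rw [if_neg hik]
        by_cases hck : c = k'
        · rw [hck]
          have : E' i k' + -b i * v * E' k' k' = 0 := by
            have e1 : E' i k' = b i := by simp [hE', hik]
            have e2 : E' k' k' = b k' := by simp [hE']
            rw [e1, e2, mul_assoc, hvu]; ring
          rw [this, Matrix.one_apply, if_neg (hck ▸ hik)]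
        · have h1 : E' k' c = 0 := by simp [hE', hck, Ne.symm hck]
          have h2 : E' i c = if i = c then 1 else 0 := by simp [hE', hck]
          rw [h1, h2, mul_zero, add_zero, Matrix.one_apply]
    have hE'E : E' * E = 1 := by
      ext i c
      rw [Matrix.mul_apply, E'sum i (fun l => E l c)]
      by_cases hik : i = k'
      · rw [if_pos hik, hik]
        by_cases hck : c = k'
        · rw [hck]
          simp [hE, huv', Matrix.one_apply]
        · simp [hE, hck, Ne.symm hck, Matrix.one_apply]
      · rw [if_neg hik]
        by_cases hck : c = k'
        · rw [hck]
          have : E i k' + b i * E k' k' = 0 := by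
            have e1 : E i k' = -b i * v := by simp [hE, hik]
            have e2 : E k' k' = v := by simp [hE]
            rw [e1, e2]; ring
          rw [this, Matrix.one_apply, if_neg (hck ▸ hik)]
        · have h1 : E k' c = 0 := by simp [hE, hck, Ne.symm hck]
          have h2 : E i c = if i = c then 1 else 0 := by simp [hE, hck]
          rw [h1, h2, mul_zero, add_zero, Matrix.one_apply]
    refine ⟨E * P, Q * E', π', ?_, ?_, ?_⟩
    · rw [Matrix.mul_assoc, ← Matrix.mul_assoc P, hPQ, Matrix.one_mul, hEE']
    · rw [Matrix.mul_assoc, ← Matrix.mul_assoc E', hE'E, Matrix.one_mul, hQP]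
    · intro i j₂ hj₂
      have hEPM : (E * P * M) i (π' j₂) = ∑ l, E i l * (P * M) l (π' j₂) := by
        rw [Matrix.mul_assoc, Matrix.mul_apply]
      rw [hEPM]
      rcases Nat.lt_or_ge (j₂ : ℕ) k with hlt | hge
      · -- j₂.val < k, column untouched
        have hne1 : j₂ ≠ κ := by
          intro h; rw [h, hκv] at hlt; omega
        have hne2 : j₂ ≠ j := by
          intro h; rw [h] at hlt; omega
        have hswap : π' j₂ = π j₂ := by
          rw [hπ', Equiv.Perm.mul_apply, Equiv.swap_apply_of_ne_of_ne hne1 hne2]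
        rw [hswap]
        rw [Esum i (fun l => (P * M) l (π j₂))]
        have hX : ∀ l : Fin m, (P * M) l (π j₂) = if (j₂ : ℕ) = (l : ℕ) then 1 else 0 :=
          fun l => hinv l j₂ hlt
        by_cases hik : i = k'
        · rw [if_pos hik, hX k', if_neg (show ¬((j₂ : ℕ) = (k' : ℕ)) by rw [hk'v]; omega),
            mul_zero, if_neg (show ¬((j₂ : ℕ) = (i : ℕ)) by rw [hik, hk'v]; omega)]
        · rw [if_neg hik, hX k', if_neg (show ¬((j₂ : ℕ) = (k' : ℕ)) by rw [hk'v]; omega),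
            mul_zero, add_zero, hX i]
      · -- j₂.val = k, i.e. j₂ = κ
        have hval : (j₂ : ℕ) = k := by omega
        have hj₂κ : j₂ = κ := Fin.ext (by rw [hval, hκv])
        subst hj₂κ
        have hswap : π' κ = π j := by
          rw [hπ', Equiv.Perm.mul_apply, Equiv.swap_apply_left]
        rw [hswap]
        rw [Esum i (fun l => (P * M) l (π j))]
        by_cases hik : i = k'
        · rw [if_pos hik]
          have h1 : v * (P * M) k' (π j) = 1 := hvu
          rw [h1, if_pos (show ((κ : ℕ) = (i : ℕ)) by rw [hκv, hik, hk'v])]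
        · rw [if_neg hik]
          have hbb : (P * M) i (π j) + -b i * v * (P * M) k' (π j) = 0 := by
            show b i + -b i * v * b k' = 0
            rw [mul_assoc, hvu]; ring
          rw [hbb, if_neg]
          rw [hκv]
          intro h; exact hik (Fin.ext (by rw [hk'v, h]))
    
/-- A surjective homomorphism `(ℤ/9)^n → (ℤ/9)^m` (with `m ≤ n`) can, after a change of
basis of the target and a permutation of the coordinates of the source, be represented
by a matrix of block form `[I_m | A]`. -/
theorem stmt_8 (m n : ℕ) (hmn : m ≤ n)
    (s : (Fin n → ZMod 9) →+ (Fin m → ZMod 9)) (hs : Function.Surjective s) :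
    ∃ (e : (Fin m → ZMod 9) ≃+ (Fin m → ZMod 9)) (π : Equiv.Perm (Fin n))
      (A : Matrix (Fin m) (Fin n) (ZMod 9)),
      (∀ (i : Fin m) (j : Fin n), (j : ℕ) < m → A i j = if (j : ℕ) = (i : ℕ) then 1 else 0) ∧
      ∀ (x : Fin n → ZMod 9) (i : Fin m), e (s x) i = ∑ j : Fin n, A i j * x (π j) := by
  set f : (Fin n → ZMod 9) →ₗ[ZMod 9] (Fin m → ZMod 9) := s.toZModLinearMap 9 with hf
  set M : Matrix (Fin m) (Fin n) (ZMod 9) := LinearMap.toMatrix' f with hM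
  have hMx : ∀ x, M.mulVec x = s x := by
    intro x
    have : Matrix.toLin' M x = f x := by rw [hM, Matrix.toLin'_toMatrix']
    rw [Matrix.toLin'_apply] at this
    exact this
  have hMsurj : Function.Surjective M.mulVec := by
    intro y
    obtain ⟨x, hx⟩ := hs y
    exact ⟨x, by rw [hMx]; exact hx⟩
  obtain ⟨P, Q, π, hPQ, hQP, hinv⟩ := key_lemma m n hmn M hMsurj m le_rfl
  refine ⟨{ toFun := P.mulVec, invFun := Q.mulVec,
            left_inv := fun y => by rw [Matrix.mulVec_mulVec, hQP, Matrix.one_mulVec],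
            right_inv := fun y => by rw [Matrix.mulVec_mulVec, hPQ, Matrix.one_mulVec],
            map_add' := fun a b₂ => Matrix.mulVec_add P a b₂ },
    π, Matrix.of (fun i j => (P * M) i (π j)), ?_, ?_⟩
  · intro i j hj
    exact hinv i j hj
  · intro x i
    have h1 : P.mulVec (s x) i = (P * M).mulVec x i := by
      rw [← hMx, Matrix.mulVec_mulVec]
    have h2 : (P * M).mulVec x i = ∑ l, (P * M) i l * x l := by
      rw [Matrix.mulVec, dotProduct]
    have h3 : ∑ j : Fin n, (P * M) i (π j) * x (π j) = ∑ l, (P * M) i l * x l :=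
      Equiv.sum_comp π (fun l => (P * M) i l * x l)
    simp only [AddEquiv.coe_mk, Equiv.coe_fn_mk]
    rw [h1, h2, ← h3]
    rfl
end

section
/- Let σ : Z/9 → Q be the function with σ(0)=0, σ(1)=5/9, σ(2)=11/9, σ(3)=1, σ(4)=−1/9, σ(5)=−1/9, σ(6)=1, σ(7)=11/9, σ(8)=5/9. Let m ≤ n and let a^i_j ∈ Z/9 for m+1 ≤ i ≤ n, 1 ≤ j ≤ m. Then either m·σ(2) + Σ_{i=m+1}^n σ(2·(a^i_1+...+a^i_m)) ≥ (10/9)·m, or m·σ(6) + Σ_{i=m+1}^n σ(6·(a^i_1+...+a^i_m)) ≥ (10/9)·m. -/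
/-- The Casson–Gordon signature table of `L(9,4)`. -/
noncomputable def sigmaCG (a : ZMod 9) : ℚ :=
  ![0, 5/9, 11/9, 1, -1/9, -1/9, 1, 11/9, 5/9] ⟨a.val, a.val_lt⟩

lemma sigmaCG_val (y : ZMod 9) (k : ℕ) (hk : y.val = k) (h9 : k < 9) :
    sigmaCG y = ![0, 5/9, 11/9, 1, -1/9, -1/9, 1, 11/9, 5/9] ⟨k, h9⟩ := by
  subst hk; rfl

lemma sigmaCG_bad (y : ZMod 9) (h : y.val = 4 ∨ y.val = 5) : sigmaCG y = -1/9 := by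
  rcases h with h | h <;> rw [sigmaCG_val _ _ h (by norm_num)] <;> norm_num

lemma sigmaCG_good (y : ZMod 9) (h : ¬(y.val = 4 ∨ y.val = 5)) : 0 ≤ sigmaCG y := by
  push_neg at h
  have h9 := y.val_lt
  interval_cases hv : y.val <;>
    rw [sigmaCG_val _ _ hv (by norm_num)] <;> norm_num <;> omega

lemma sigmaCG_six_nonneg (y : ZMod 9) : 0 ≤ sigmaCG (6 * y) := by
  have hv : (6*y).val = 0 ∨ (6*y).val = 3 ∨ (6*y).val = 6 := by fin_cases y <;> decide
  rcases hv with h | h | h <;> rw [sigmaCG_val _ _ h (by norm_num)] <;> norm_num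

lemma sigmaCG_six_of_two (y : ZMod 9) (h : (2*y).val = 4 ∨ (2*y).val = 5) :
    sigmaCG (6 * y) = 1 := by
  have hv : (6*y).val = 3 ∨ (6*y).val = 6 := by
    fin_cases y <;> revert h <;> decide
  rcases hv with h' | h' <;> rw [sigmaCG_val _ _ h' (by norm_num)] <;> norm_num

lemma sigmaCG_two : sigmaCG 2 = 11/9 := by
  rw [sigmaCG_val _ 2 (by decide) (by norm_num)]; norm_num

lemma sigmaCG_six : sigmaCG 6 = 1 := by
  rw [sigmaCG_val _ 6 (by decide) (by norm_num)]; norm_num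

/-- For any `a^i_j ∈ ℤ/9` (`m+1 ≤ i ≤ n`, `1 ≤ j ≤ m`), either
`m·σ(2) + Σ_i σ(2·Σ_j a^i_j) ≥ (10/9)m` or `m·σ(6) + Σ_i σ(6·Σ_j a^i_j) ≥ (10/9)m`. -/
theorem stmt_10 (m n : ℕ) (hmn : m ≤ n) (a : Fin (n - m) → Fin m → ZMod 9) :
    (10 / 9 : ℚ) * m ≤ (m : ℚ) * sigmaCG 2 + ∑ i, sigmaCG (2 * ∑ j, a i j) ∨
      (10 / 9 : ℚ) * m ≤ (m : ℚ) * sigmaCG 6 + ∑ i, sigmaCG (6 * ∑ j, a i j) := by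
  set b : Fin (n - m) → ZMod 9 := fun i => ∑ j, a i j with hb
  set T : Finset (Fin (n - m)) :=
    Finset.univ.filter (fun i => (2 * b i).val = 4 ∨ (2 * b i).val = 5) with hT
  have hm0 : (0:ℚ) ≤ (m:ℚ) := Nat.cast_nonneg m
  by_cases hc : m ≤ T.card
  · right
    have h1 : (m:ℚ) ≤ ∑ i, sigmaCG (6 * b i) := by
      calc (m:ℚ) ≤ (T.card : ℚ) := by exact_mod_cast hc
        _ = ∑ _i ∈ T, (1:ℚ) := by simp
        _ = ∑ i ∈ T, sigmaCG (6 * b i) := by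
            refine Finset.sum_congr rfl fun i hi => ?_
            exact (sigmaCG_six_of_two (b i) (Finset.mem_filter.mp hi).2).symm
        _ ≤ ∑ i, sigmaCG (6 * b i) :=
            Finset.sum_le_sum_of_subset_of_nonneg (Finset.subset_univ T)
              fun i _ _ => sigmaCG_six_nonneg (b i)
    rw [sigmaCG_six]
    linarith
  · left
    push_neg at hc
    have hsplit := Finset.sum_filter_add_sum_filter_not Finset.univ
      (fun i => (2 * b i).val = 4 ∨ (2 * b i).val = 5) (fun i => sigmaCG (2 * b i))
    have hTsum : ∑ i ∈ T, sigmaCG (2 * b i) = -(T.card : ℚ)/9 := by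
      rw [Finset.sum_congr rfl fun i hi => sigmaCG_bad _ (Finset.mem_filter.mp hi).2]
      simp [Finset.sum_const]
      ring
    have hTc : 0 ≤ ∑ i ∈ Finset.univ.filter
        (fun i => ¬((2 * b i).val = 4 ∨ (2 * b i).val = 5)), sigmaCG (2 * b i) :=
      Finset.sum_nonneg fun i hi => sigmaCG_good _ (Finset.mem_filter.mp hi).2
    have hcard : (T.card : ℚ) ≤ (m:ℚ) - 1 := by
      have h' : (T.card : ℕ) + 1 ≤ m := hc
      have := (Nat.cast_le (α := ℚ)).mpr h'
      push_cast at this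
      linarith
    have hsum : -((m:ℚ) - 1)/9 ≤ ∑ i, sigmaCG (2 * b i) := by
      rw [← hsplit, ← hT, hTsum]
      have h9 : -((m:ℚ) - 1)/9 ≤ -(T.card : ℚ)/9 := by linarith
      linarith
    rw [sigmaCG_two]
    linarith
end

section
/- Let G₁ and G₂ be finite abelian groups, n₁, n₂ natural numbers, and suppose there exist elements a^i_j ∈ G_i ⊕ Z^{2n_i} (i = 1, 2; j = 1, ..., 2(n₁+n₂)) such that (G₁ ⊕ Z^{2n₁})/⟨{a¹_j}⟩ ≅ G₂ and (G₂ ⊕ Z^{2n₂})/⟨{a²_j}⟩ ≅ G₁. Then if G = (G₁ ⊕ Z^{2n₁} ⊕ G₂ ⊕ Z^{2n₂})/⟨{(a¹_j, a²_j)}⟩ is finite, its order satisfies: |G| admits G₁ ⊕ G₂ as a quotient, hence |G₁|·|G₂| divides |G|. -/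
/-- For an admissible triple: if `(G₁ ⊕ ℤ^{2n₁})/⟨a¹_j⟩ ≅ G₂`,
`(G₂ ⊕ ℤ^{2n₂})/⟨a²_j⟩ ≅ G₁`, and the quotient `G` of the direct sum by the diagonal
relations is finite, then `|G₁|·|G₂|` divides `|G|`. -/
theorem stmt_12 (G₁ G₂ : Type*) [AddCommGroup G₁] [Finite G₁] [AddCommGroup G₂] [Finite G₂]
    (n₁ n₂ : ℕ)
    (a₁ : Fin (2 * (n₁ + n₂)) → G₁ × (Fin (2 * n₁) → ℤ))
    (a₂ : Fin (2 * (n₁ + n₂)) → G₂ × (Fin (2 * n₂) → ℤ))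
    (e₁ : ((G₁ × (Fin (2 * n₁) → ℤ)) ⧸ AddSubgroup.closure (Set.range a₁)) ≃+ G₂)
    (e₂ : ((G₂ × (Fin (2 * n₂) → ℤ)) ⧸ AddSubgroup.closure (Set.range a₂)) ≃+ G₁)
    (G : Type*) [AddCommGroup G] [Finite G]
    (e : G ≃+
      ((G₁ × (Fin (2 * n₁) → ℤ)) × (G₂ × (Fin (2 * n₂) → ℤ))) ⧸
        AddSubgroup.closure (Set.range fun j => (a₁ j, a₂ j))) :
    Nat.card G₁ * Nat.card G₂ ∣ Nat.card G := by
  let f : (G₁ × (Fin (2 * n₁) → ℤ)) × (G₂ × (Fin (2 * n₂) → ℤ)) →+ G₂ × G₁ :=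
    AddMonoidHom.prodMap
      (e₁.toAddMonoidHom.comp (QuotientAddGroup.mk' (AddSubgroup.closure (Set.range a₁))))
      (e₂.toAddMonoidHom.comp (QuotientAddGroup.mk' (AddSubgroup.closure (Set.range a₂))))
  have hker : AddSubgroup.closure (Set.range fun j => (a₁ j, a₂ j)) ≤ f.ker := by
    rw [AddSubgroup.closure_le]
    rintro x ⟨j, rfl⟩
    have h1 : ((a₁ j) : (G₁ × (Fin (2 * n₁) → ℤ)) ⧸ AddSubgroup.closure (Set.range a₁)) = 0 := by
      rw [QuotientAddGroup.eq_zero_iff]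
      exact AddSubgroup.subset_closure ⟨j, rfl⟩
    have h2 : ((a₂ j) : (G₂ × (Fin (2 * n₂) → ℤ)) ⧸ AddSubgroup.closure (Set.range a₂)) = 0 := by
      rw [QuotientAddGroup.eq_zero_iff]
      exact AddSubgroup.subset_closure ⟨j, rfl⟩
    have hfj : f (a₁ j, a₂ j) =
        (e₁ ((a₁ j : (G₁ × (Fin (2 * n₁) → ℤ)) ⧸ AddSubgroup.closure (Set.range a₁))),
         e₂ ((a₂ j : (G₂ × (Fin (2 * n₂) → ℤ)) ⧸ AddSubgroup.closure (Set.range a₂)))) := rfl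
    rw [SetLike.mem_coe, AddMonoidHom.mem_ker, hfj, h1, h2]
    simp
  have hf : Function.Surjective f := by
    rintro ⟨y₁, y₂⟩
    obtain ⟨x₁, hx₁⟩ := (e₁.surjective.comp (QuotientAddGroup.mk'_surjective _)) y₁
    obtain ⟨x₂, hx₂⟩ := (e₂.surjective.comp (QuotientAddGroup.mk'_surjective _)) y₂
    exact ⟨(x₁, x₂), Prod.ext hx₁ hx₂⟩
  let g := QuotientAddGroup.lift _ f hker
  have hg : Function.Surjective g := fun y => by
    obtain ⟨x, hx⟩ := hf y
    exact ⟨QuotientAddGroup.mk x, hx⟩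
  have := AddSubgroup.card_dvd_of_surjective (g.comp e.toAddMonoidHom)
    (hg.comp e.surjective)
  rwa [Nat.card_prod, Nat.mul_comm] at this
end
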